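/- Let (X^(1),Y^(1)) and (X^(2),Y^(2)) be two i.i.d. samples from a joint law p_{X,Y} on ℝ^d × ℝ, let i, j ∈ {1,…,d}, and let T : ℝ^d × ℝ → ℝ be measurable with ties T(X^(1),Y^(1)) = T(X^(2)_swap(i,j), Y^(2)) occurring with probability zero (or broken by an independent fair coin). Define π = P( T(X^(1),Y^(1)) ≥ T(X^(2)_swap(i,j), Y^(2)) ). Then |π − 1/2| ≤ E_X[ d_TV( ℒ(Y | X_swap(i,j)), ℒ(Y | X) ) ] + d_TV( ℒ(X), ℒ(X_swap(i,j)) ). -/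

import Mathlib

open MeasureTheory ProbabilityTheory Real

/-- `swapVec i j x` is the vector obtained from `x` by swapping coordinates `i` and `j`. -/
def swapVec {d : ℕ} (i j : Fin d) (x : Fin d → ℝ) : Fin d → ℝ := fun k => x (Equiv.swap i j k)

/-- Total variation distance between two measures:
`d_TV(p, q) = sup_{measurable s} |p(s) - q(s)|`. -/
noncomputable def tvDist {α : Type*} [MeasurableSpace α] (p q : Measure α) : ℝ :=
  ⨆ s : {s : Set α // MeasurableSet s}, |(p s.1).toReal - (q s.1).toReal|

section Aux

variable {α : Type*} [MeasurableSpace α]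

lemma swapVec_involutive {d : ℕ} (i j : Fin d) (x : Fin d → ℝ) :
    swapVec i j (swapVec i j x) = x := by
  funext k
  simp [swapVec, Equiv.swap_apply_self]

lemma measurable_swapVec {d : ℕ} (i j : Fin d) : Measurable (swapVec i j) :=
  measurable_pi_lambda _ fun k => measurable_pi_apply _

lemma toReal_prob_le_one {m : Measure α} [IsProbabilityMeasure m] (s : Set α) :
    (m s).toReal ≤ 1 := by
  have h := prob_le_one (μ := m) (s := s)
  have := ENNReal.toReal_mono (by simp) h
  simpa using this

lemma tvDist_bddAbove (p q : Measure α) [IsFiniteMeasure p] [IsFiniteMeasure q] :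
    BddAbove (Set.range fun s : {s : Set α // MeasurableSet s} =>
      |(p s.1).toReal - (q s.1).toReal|) := by
  refine ⟨(p Set.univ).toReal + (q Set.univ).toReal, ?_⟩
  rintro x ⟨s, rfl⟩
  have h1 : (p s.1).toReal ≤ (p Set.univ).toReal :=
    ENNReal.toReal_mono (measure_ne_top _ _) (measure_mono (Set.subset_univ _))
  have h2 : (q s.1).toReal ≤ (q Set.univ).toReal :=
    ENNReal.toReal_mono (measure_ne_top _ _) (measure_mono (Set.subset_univ _))
  have h3 : 0 ≤ (p s.1).toReal := ENNReal.toReal_nonneg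
  have h4 : 0 ≤ (q s.1).toReal := ENNReal.toReal_nonneg
  rw [abs_sub_le_iff]
  constructor <;> linarith

lemma abs_toReal_sub_le_tvDist (p q : Measure α) [IsFiniteMeasure p] [IsFiniteMeasure q]
    {s : Set α} (hs : MeasurableSet s) :
    |(p s).toReal - (q s).toReal| ≤ tvDist p q :=
  le_ciSup (tvDist_bddAbove p q) (⟨s, hs⟩ : {s : Set α // MeasurableSet s})

lemma tvDist_nonneg (p q : Measure α) [IsFiniteMeasure p] [IsFiniteMeasure q] :
    0 ≤ tvDist p q :=
  (abs_nonneg _).trans (abs_toReal_sub_le_tvDist p q MeasurableSet.empty)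

lemma tvDist_le {p q : Measure α} {c : ℝ}
    (hc : ∀ s : Set α, MeasurableSet s → |(p s).toReal - (q s).toReal| ≤ c) :
    tvDist p q ≤ c :=
  ciSup_le fun s => hc s.1 s.2

lemma tvDist_comm (p q : Measure α) : tvDist p q = tvDist q p := by
  have : (fun s : {s : Set α // MeasurableSet s} => |(p s.1).toReal - (q s.1).toReal|)
      = fun s => |(q s.1).toReal - (p s.1).toReal| := funext fun s => abs_sub_comm _ _
  rw [tvDist, tvDist, this]

lemma tvDist_triangle (p q r : Measure α) [IsFiniteMeasure p] [IsFiniteMeasure q]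
    [IsFiniteMeasure r] : tvDist p r ≤ tvDist p q + tvDist q r :=
  tvDist_le fun s hs =>
    (abs_sub_le _ _ _).trans
      (add_le_add (abs_toReal_sub_le_tvDist p q hs) (abs_toReal_sub_le_tvDist q r hs))

lemma tvDist_le_two (p q : Measure α) [IsProbabilityMeasure p] [IsProbabilityMeasure q] :
    tvDist p q ≤ 2 :=
  tvDist_le fun s _ => by
    have h1 := toReal_prob_le_one (m := p) s
    have h2 := toReal_prob_le_one (m := q) s
    have h3 : (0:ℝ) ≤ (p s).toReal := ENNReal.toReal_nonneg
    have h4 : (0:ℝ) ≤ (q s).toReal := ENNReal.toReal_nonneg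
    rw [abs_sub_le_iff]
    constructor <;> linarith

lemma integrable_of_bounded_meas {p : Measure α} [IsProbabilityMeasure p]
    {f : α → ℝ} {C : ℝ} (hf : Measurable f) (h : ∀ x, |f x| ≤ C) : Integrable f p :=
  Integrable.mono' (integrable_const C) hf.aestronglyMeasurable
    (Filter.Eventually.of_forall fun x => by simpa using h x)

/-- `|∫ f - ∫ g| ≤ ∫ h` when `|f - g| ≤ h` pointwise and `f, g` are bounded. -/
lemma abs_integral_sub_integral_le {p : Measure α} [IsProbabilityMeasure p]
    {f g h : α → ℝ} (hf : Measurable f) (hg : Measurable g)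
    (hfb : ∀ x, |f x| ≤ 1) (hgb : ∀ x, |g x| ≤ 1)
    (hfg : ∀ x, |f x - g x| ≤ h x) (hh : Integrable h p) :
    |∫ x, f x ∂p - ∫ x, g x ∂p| ≤ ∫ x, h x ∂p := by
  have hfi : Integrable f p := integrable_of_bounded_meas hf hfb
  have hgi : Integrable g p := integrable_of_bounded_meas hg hgb
  rw [← integral_sub hfi hgi]
  have h1 : |∫ x, (f x - g x) ∂p| ≤ ∫ x, |f x - g x| ∂p := by
    simpa [Real.norm_eq_abs] using norm_integral_le_integral_norm (fun x => f x - g x) (μ := p)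
  exact h1.trans (integral_mono (hfi.sub hgi).abs hh hfg)

/-- Difference of integrals of a `[0,1]`-valued function against two probability
measures is at most the total variation distance (layer-cake argument). -/
lemma abs_integral_sub_le_tvDist {p p' : Measure α}
    [IsProbabilityMeasure p] [IsProbabilityMeasure p'] {g : α → ℝ} (hg : Measurable g)
    (hg0 : ∀ x, 0 ≤ g x) (hg1 : ∀ x, g x ≤ 1) :
    |∫ x, g x ∂p - ∫ x, g x ∂p'| ≤ tvDist p p' := by
  have key : ∀ (m : Measure α), IsProbabilityMeasure m →
      ∫ x, g x ∂m = ∫ t in Set.Ioc (0:ℝ) 1, (m {a | t ≤ g a}).toReal := by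
    intro m hm
    exact Integrable.integral_eq_integral_Ioc_meas_le
      (integrable_of_bounded_meas hg fun x => abs_le.mpr ⟨by linarith [hg0 x], hg1 x⟩)
      (Filter.Eventually.of_forall hg0) (Filter.Eventually.of_forall hg1)
  rw [key p inferInstance, key p' inferInstance]
  set F : ℝ → ℝ := fun t => (p {a | t ≤ g a}).toReal with hF
  set G : ℝ → ℝ := fun t => (p' {a | t ≤ g a}).toReal with hG
  have hmeas : ∀ t : ℝ, MeasurableSet {a | t ≤ g a} := fun t =>
    hg measurableSet_Ici
  have hFmeas : Measurable F := by
    apply Antitone.measurable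
    intro s t hst
    exact ENNReal.toReal_mono (measure_ne_top _ _)
      (measure_mono fun a ha => le_trans hst ha)
  have hGmeas : Measurable G := by
    apply Antitone.measurable
    intro s t hst
    exact ENNReal.toReal_mono (measure_ne_top _ _)
      (measure_mono fun a ha => le_trans hst ha)
  have hvol : (volume (Set.Ioc (0:ℝ) 1)) ≠ ⊤ := by simp
  have hFi : IntegrableOn F (Set.Ioc (0:ℝ) 1) volume := by
    apply Measure.integrableOn_of_bounded hvol hFmeas.aestronglyMeasurable (M := 1)
    exact Filter.Eventually.of_forall fun t => by
      simpa [hF, Real.norm_eq_abs, abs_of_nonneg (ENNReal.toReal_nonneg (a := p {a | t ≤ g a}))]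
        using toReal_prob_le_one (m := p) {a | t ≤ g a}
  have hGi : IntegrableOn G (Set.Ioc (0:ℝ) 1) volume := by
    apply Measure.integrableOn_of_bounded hvol hGmeas.aestronglyMeasurable (M := 1)
    exact Filter.Eventually.of_forall fun t => by
      simpa [hG, Real.norm_eq_abs, abs_of_nonneg (ENNReal.toReal_nonneg (a := p' {a | t ≤ g a}))]
        using toReal_prob_le_one (m := p') {a | t ≤ g a}
  rw [← integral_sub hFi hGi]
  have h1 : |∫ t in Set.Ioc (0:ℝ) 1, (F t - G t)| ≤ ∫ t in Set.Ioc (0:ℝ) 1, |F t - G t| := by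
    simpa [Real.norm_eq_abs] using
      norm_integral_le_integral_norm (fun t => F t - G t) (μ := volume.restrict (Set.Ioc (0:ℝ) 1))
  refine h1.trans ?_
  have h2 : ∫ t in Set.Ioc (0:ℝ) 1, |F t - G t|
      ≤ ∫ _t in Set.Ioc (0:ℝ) 1, tvDist p p' := by
    apply integral_mono (hFi.sub hGi).abs ((integrableOn_const_iff).mpr (Or.inr (by simp)))
    intro t
    exact abs_toReal_sub_le_tvDist p p' (hmeas t)
  refine h2.trans ?_
  rw [setIntegral_const]
  simp

end Aux

section Rat

/-- Finite unions of open intervals with rational endpoints. -/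
def ratUnion (F : Finset (ℚ × ℚ)) : Set ℝ := ⋃ r ∈ F, Set.Ioo (r.1 : ℝ) (r.2 : ℝ)

lemma measurableSet_ratUnion (F : Finset (ℚ × ℚ)) : MeasurableSet (ratUnion F) :=
  MeasurableSet.biUnion F.countable_toSet fun _ _ => measurableSet_Ioo

/-- Total variation distance computed over the countable family of finite unions of
rational open intervals. -/
noncomputable def tvDistQ (p q : Measure ℝ) : ℝ :=
  ⨆ F : Finset (ℚ × ℚ), |(p (ratUnion F)).toReal - (q (ratUnion F)).toReal|

lemma tvDistQ_bddAbove (p q : Measure ℝ) [IsFiniteMeasure p] [IsFiniteMeasure q] :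
    BddAbove (Set.range fun F : Finset (ℚ × ℚ) =>
      |(p (ratUnion F)).toReal - (q (ratUnion F)).toReal|) := by
  refine ⟨(p Set.univ).toReal + (q Set.univ).toReal, ?_⟩
  rintro x ⟨F, rfl⟩
  have h1 : (p (ratUnion F)).toReal ≤ (p Set.univ).toReal :=
    ENNReal.toReal_mono (measure_ne_top _ _) (measure_mono (Set.subset_univ _))
  have h2 : (q (ratUnion F)).toReal ≤ (q Set.univ).toReal :=
    ENNReal.toReal_mono (measure_ne_top _ _) (measure_mono (Set.subset_univ _))
  have h3 : 0 ≤ (p (ratUnion F)).toReal := ENNReal.toReal_nonneg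
  have h4 : 0 ≤ (q (ratUnion F)).toReal := ENNReal.toReal_nonneg
  rw [abs_sub_le_iff]
  constructor <;> linarith

lemma abs_open_le_tvDistQ (p q : Measure ℝ) [IsFiniteMeasure p] [IsFiniteMeasure q]
    {U : Set ℝ} (hU : IsOpen U) :
    |(p U).toReal - (q U).toReal| ≤ tvDistQ p q := by
  classical
  set e : ℕ → ℚ × ℚ := fun n => (Denumerable.eqv (ℚ × ℚ)).symm n with he_def
  have he : Function.Surjective e := (Denumerable.eqv (ℚ × ℚ)).symm.surjective
  set F : ℕ → Finset (ℚ × ℚ) := fun n =>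
    ((Finset.range n).image e).filter (fun r => Set.Ioo (r.1 : ℝ) (r.2 : ℝ) ⊆ U) with hF_def
  have hFmono : ∀ {m n : ℕ}, m ≤ n → F m ⊆ F n := by
    intro m n hmn
    apply Finset.filter_subset_filter
    exact Finset.image_subset_image (Finset.range_subset_range.mpr hmn)
  have hmono : Monotone fun n => ratUnion (F n) := by
    intro m n hmn x hx
    simp only [ratUnion, Set.mem_iUnion, exists_prop] at hx ⊢
    obtain ⟨r, hr, hxr⟩ := hx
    exact ⟨r, hFmono hmn hr, hxr⟩
  have hsub : ∀ n, ratUnion (F n) ⊆ U := by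
    intro n x hx
    simp only [ratUnion, Set.mem_iUnion] at hx
    obtain ⟨r, hr, hxr⟩ := hx
    have := (Finset.mem_filter.mp hr).2
    exact this hxr
  have hcover : U ⊆ ⋃ n, ratUnion (F n) := by
    intro x hx
    obtain ⟨ε, hε, hball⟩ := Metric.isOpen_iff.mp hU x hx
    obtain ⟨a, ha1, ha2⟩ := exists_rat_btwn (show x - ε < x by linarith)
    obtain ⟨b, hb1, hb2⟩ := exists_rat_btwn (show x < x + ε by linarith)
    have hIoo : Set.Ioo (a:ℝ) (b:ℝ) ⊆ U := by
      refine subset_trans ?_ hball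
      rw [Real.ball_eq_Ioo]
      exact Set.Ioo_subset_Ioo (le_of_lt ha1) (le_of_lt hb2)
    obtain ⟨m, hm⟩ := he (a, b)
    refine Set.mem_iUnion.mpr ⟨m + 1, ?_⟩
    simp only [ratUnion, Set.mem_iUnion]
    refine ⟨(a, b), ?_, ⟨ha2, hb1⟩⟩
    rw [hF_def]
    simp only [Finset.mem_filter, Finset.mem_image, Finset.mem_range]
    exact ⟨⟨m, Nat.lt_succ_self m, hm⟩, hIoo⟩
  have hUnion : (⋃ n, ratUnion (F n)) = U :=
    subset_antisymm (Set.iUnion_subset hsub) hcover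
  have hp : Filter.Tendsto (fun n => (p (ratUnion (F n))).toReal) Filter.atTop
      (nhds (p U).toReal) := by
    have := tendsto_measure_iUnion_atTop (μ := p) hmono
    rw [hUnion] at this
    exact ((ENNReal.tendsto_toReal (measure_ne_top p U)).comp this)
  have hq : Filter.Tendsto (fun n => (q (ratUnion (F n))).toReal) Filter.atTop
      (nhds (q U).toReal) := by
    have := tendsto_measure_iUnion_atTop (μ := q) hmono
    rw [hUnion] at this
    exact ((ENNReal.tendsto_toReal (measure_ne_top q U)).comp this)
  have habs : Filter.Tendsto
      (fun n => |(p (ratUnion (F n))).toReal - (q (ratUnion (F n))).toReal|) Filter.atTop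
      (nhds |(p U).toReal - (q U).toReal|) := (hp.sub hq).abs
  refine le_of_tendsto habs (Filter.Eventually.of_forall fun n => ?_)
  exact le_ciSup (tvDistQ_bddAbove p q) (F n)

lemma tvDist_eq_tvDistQ (p q : Measure ℝ) [IsFiniteMeasure p] [IsFiniteMeasure q] :
    tvDist p q = tvDistQ p q := by
  apply le_antisymm
  · apply tvDist_le
    intro s hs
    apply le_of_forall_pos_le_add
    intro ε hε
    have hρlt : (p + q) s < (p + q) s + ENNReal.ofReal (ε / 2) :=
      ENNReal.lt_add_right (measure_ne_top _ _)
        (by simp [ENNReal.ofReal_eq_zero]; linarith)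
    obtain ⟨U, hsU, hUopen, hUlt⟩ := Set.exists_isOpen_lt_of_lt s _ hρlt
    have hdiff : (p + q) (U \ s) ≤ ENNReal.ofReal (ε / 2) := by
      rw [measure_diff hsU hs.nullMeasurableSet (measure_ne_top _ _)]
      rw [tsub_le_iff_right, add_comm (ENNReal.ofReal (ε / 2))]
      exact hUlt.le
    have hps : p (U \ s) ≤ ENNReal.ofReal (ε / 2) := by
      refine le_trans ?_ hdiff
      rw [Measure.add_apply]
      exact le_self_add
    have hqs : q (U \ s) ≤ ENNReal.ofReal (ε / 2) := by
      refine le_trans ?_ hdiff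
      rw [Measure.add_apply]
      exact le_add_self
    have hkey : ∀ (m : Measure ℝ), IsFiniteMeasure m → m (U \ s) ≤ ENNReal.ofReal (ε / 2) →
        (m U).toReal ≤ (m s).toReal + ε / 2 := by
      intro m hm hmd
      have h1 : m U ≤ m s + ENNReal.ofReal (ε / 2) := by
        calc m U = m (s ∪ (U \ s)) := by rw [Set.union_diff_cancel hsU]
        _ ≤ m s + m (U \ s) := measure_union_le _ _
        _ ≤ m s + ENNReal.ofReal (ε / 2) := add_le_add_right hmd _
      calc (m U).toReal ≤ (m s + ENNReal.ofReal (ε / 2)).toReal :=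
            ENNReal.toReal_mono (by simp [measure_ne_top]) h1
      _ = (m s).toReal + ε / 2 := by
          rw [ENNReal.toReal_add (measure_ne_top _ _) (by simp)]
          rw [ENNReal.toReal_ofReal (by linarith)]
    have hpU : (p U).toReal ≤ (p s).toReal + ε / 2 := hkey p inferInstance hps
    have hqU : (q U).toReal ≤ (q s).toReal + ε / 2 := hkey q inferInstance hqs
    have hpsU : (p s).toReal ≤ (p U).toReal :=
      ENNReal.toReal_mono (measure_ne_top _ _) (measure_mono hsU)
    have hqsU : (q s).toReal ≤ (q U).toReal :=
      ENNReal.toReal_mono (measure_ne_top _ _) (measure_mono hsU)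
    have hopen := abs_open_le_tvDistQ p q hUopen
    have h1 : |(p s).toReal - (p U).toReal| ≤ ε / 2 := abs_le.mpr ⟨by linarith, by linarith⟩
    have h2 : |(q U).toReal - (q s).toReal| ≤ ε / 2 := abs_le.mpr ⟨by linarith, by linarith⟩
    calc |(p s).toReal - (q s).toReal|
        ≤ |(p s).toReal - (p U).toReal| + |(p U).toReal - (q s).toReal| := abs_sub_le _ _ _
      _ ≤ |(p s).toReal - (p U).toReal| + (|(p U).toReal - (q U).toReal|
            + |(q U).toReal - (q s).toReal|) := by
          exact add_le_add_right (abs_sub_le _ _ _) _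
      _ ≤ tvDistQ p q + ε := by linarith
  · exact ciSup_le fun F => abs_toReal_sub_le_tvDist p q (measurableSet_ratUnion F)

lemma measurable_tvDist_kernel {β : Type*} [MeasurableSpace β] (κ₁ κ₂ : Kernel β ℝ)
    [IsMarkovKernel κ₁] [IsMarkovKernel κ₂] :
    Measurable fun x => tvDist (κ₁ x) (κ₂ x) := by
  have h : (fun x => tvDist (κ₁ x) (κ₂ x)) = fun x => tvDistQ (κ₁ x) (κ₂ x) :=
    funext fun x => tvDist_eq_tvDistQ _ _
  rw [h]
  unfold tvDistQ
  exact Measurable.iSup fun F =>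
    ((κ₁.measurable_coe (measurableSet_ratUnion F)).ennreal_toReal.sub
      (κ₂.measurable_coe (measurableSet_ratUnion F)).ennreal_toReal).abs

end Rat

section Prod

variable {E : Type*} [MeasurableSpace E]

lemma toReal_prod_apply (p q : Measure E) [IsProbabilityMeasure p] [IsProbabilityMeasure q]
    {A : Set (E × E)} (hA : MeasurableSet A) :
    ((p.prod q) A).toReal = ∫ x, (q (Prod.mk x ⁻¹' A)).toReal ∂p := by
  rw [Measure.prod_apply hA, ← integral_toReal]
  · exact (measurable_measure_prodMk_left hA).aemeasurable
  · exact Filter.Eventually.of_forall fun x => measure_lt_top _ _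

lemma abs_prod_sub_prod_snd (p q q' : Measure E) [IsProbabilityMeasure p]
    [IsProbabilityMeasure q] [IsProbabilityMeasure q'] {A : Set (E × E)} (hA : MeasurableSet A) :
    |((p.prod q) A).toReal - ((p.prod q') A).toReal| ≤ tvDist q q' := by
  rw [toReal_prod_apply p q hA, toReal_prod_apply p q' hA]
  have hb : ∀ (m : Measure E), IsProbabilityMeasure m →
      ∀ x : E, |(m (Prod.mk x ⁻¹' A)).toReal| ≤ 1 := by
    intro m hm x
    rw [abs_of_nonneg ENNReal.toReal_nonneg]
    exact toReal_prob_le_one _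
  have := abs_integral_sub_integral_le (p := p)
    (f := fun x => (q (Prod.mk x ⁻¹' A)).toReal)
    (g := fun x => (q' (Prod.mk x ⁻¹' A)).toReal)
    (h := fun _ => tvDist q q')
    (measurable_measure_prodMk_left hA).ennreal_toReal
    (measurable_measure_prodMk_left hA).ennreal_toReal
    (hb q inferInstance) (hb q' inferInstance)
    (fun x => abs_toReal_sub_le_tvDist q q' (measurable_prodMk_left hA))
    (integrable_const _)
  simpa using this

lemma abs_prod_sub_prod_fst (p p' q : Measure E) [IsProbabilityMeasure p]
    [IsProbabilityMeasure p'] [IsProbabilityMeasure q] {A : Set (E × E)} (hA : MeasurableSet A) :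
    |((p.prod q) A).toReal - ((p'.prod q) A).toReal| ≤ tvDist p p' := by
  have h1 : (p.prod q) A = (q.prod p) (Prod.swap ⁻¹' A) := by
    rw [← Measure.prod_swap, Measure.map_apply measurable_swap hA]
  have h2 : (p'.prod q) A = (q.prod p') (Prod.swap ⁻¹' A) := by
    rw [← Measure.prod_swap, Measure.map_apply measurable_swap hA]
  rw [h1, h2]
  exact abs_prod_sub_prod_snd q p p' (measurable_swap hA)

/-- Key combinatorial step: the probability of `S z₂ ≤ S z₁` for independent `z₁ ~ μ`,
`z₂ ~ ν` deviates from `1/2` by at most `tvDist μ ν`, assuming no ties. -/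
lemma half_dev (μ ν : Measure E) [IsProbabilityMeasure μ] [IsProbabilityMeasure ν]
    (S : E → ℝ) (hS : Measurable S)
    (hties : (μ.prod ν) {z : E × E | S z.1 = S z.2} = 0) :
    |((μ.prod ν) {z : E × E | S z.2 ≤ S z.1}).toReal - 1 / 2| ≤ tvDist μ ν := by
  set A : Set (E × E) := {z : E × E | S z.2 ≤ S z.1} with hA_def
  set B : Set (E × E) := {z : E × E | S z.1 ≤ S z.2} with hB_def
  have hA : MeasurableSet A := measurableSet_le (hS.comp measurable_snd) (hS.comp measurable_fst)
  have hB : MeasurableSet B := measurableSet_le (hS.comp measurable_fst) (hS.comp measurable_snd)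
  have hunion : A ∪ B = Set.univ := by
    ext z; simp [hA_def, hB_def, le_total (S z.2) (S z.1)]
  have hinter : A ∩ B = {z : E × E | S z.1 = S z.2} := by
    ext z
    simp only [hA_def, hB_def, Set.mem_inter_iff, Set.mem_setOf_eq]
    constructor
    · rintro ⟨h1, h2⟩; exact le_antisymm h2 h1
    · intro h; exact ⟨le_of_eq h.symm, le_of_eq h⟩
  have hsum : (μ.prod ν) A + (μ.prod ν) B = 1 := by
    have h := measure_union_add_inter (μ := μ.prod ν) A hB
    rw [hunion, hinter, hties, add_zero] at h
    rw [← h, measure_univ]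
  have hsumR : ((μ.prod ν) A).toReal + ((μ.prod ν) B).toReal = 1 := by
    rw [← ENNReal.toReal_add (measure_ne_top _ _) (measure_ne_top _ _), hsum]
    simp
  have hswap : (ν.prod μ) A = (μ.prod ν) B := by
    rw [← Measure.prod_swap, Measure.map_apply measurable_swap hA]
    rfl
  set a := ((μ.prod ν) A).toReal with ha_def
  set b := ((μ.prod ν) B).toReal with hb_def
  have h1 : |a - ((μ.prod μ) A).toReal| ≤ tvDist ν μ := abs_prod_sub_prod_snd μ ν μ hA
  have h2 : |((μ.prod μ) A).toReal - b| ≤ tvDist μ ν := by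
    rw [hb_def, ← hswap]
    exact abs_prod_sub_prod_fst μ ν μ hA
  have hab : |a - b| ≤ tvDist ν μ + tvDist μ ν :=
    (abs_sub_le a ((μ.prod μ) A).toReal b).trans (add_le_add h1 h2)
  have hhalf : a - 1 / 2 = (a - b) / 2 := by linarith
  rw [hhalf, abs_div, abs_two]
  rw [tvDist_comm ν μ] at hab
  linarith

end Prod

section CompProd

variable {β : Type*} [MeasurableSpace β]

lemma toReal_compProd_apply (p : Measure β) [IsProbabilityMeasure p]
    (κ₁ : Kernel β ℝ) [IsMarkovKernel κ₁] {s : Set (β × ℝ)} (hs : MeasurableSet s) :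
    ((p ⊗ₘ κ₁) s).toReal = ∫ x, ((κ₁ x) (Prod.mk x ⁻¹' s)).toReal ∂p := by
  rw [Measure.compProd_apply hs, ← integral_toReal]
  · exact (Kernel.measurable_kernel_prodMk_left hs).aemeasurable
  · exact Filter.Eventually.of_forall fun x => measure_lt_top _ _

lemma tvDist_compProd_right (p : Measure β) [IsProbabilityMeasure p]
    (κ₁ κ₂ : Kernel β ℝ) [IsMarkovKernel κ₁] [IsMarkovKernel κ₂]
    {h : β → ℝ} (hmeas : Measurable h)
    (hbound : ∀ x : β, ∀ s : Set ℝ, MeasurableSet s →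
      |((κ₁ x) s).toReal - ((κ₂ x) s).toReal| ≤ h x)
    (hint : Integrable h p) :
    tvDist (p ⊗ₘ κ₁) (p ⊗ₘ κ₂) ≤ ∫ x, h x ∂p := by
  apply tvDist_le
  intro s hs
  rw [toReal_compProd_apply p κ₁ hs, toReal_compProd_apply p κ₂ hs]
  have hb : ∀ (κ : Kernel β ℝ), IsMarkovKernel κ →
      ∀ x : β, |((κ x) (Prod.mk x ⁻¹' s)).toReal| ≤ 1 := by
    intro κ hκ x
    rw [abs_of_nonneg ENNReal.toReal_nonneg]
    exact toReal_prob_le_one _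
  exact abs_integral_sub_integral_le
    (Kernel.measurable_kernel_prodMk_left hs).ennreal_toReal
    (Kernel.measurable_kernel_prodMk_left hs).ennreal_toReal
    (hb κ₁ inferInstance) (hb κ₂ inferInstance)
    (fun x => hbound x _ (measurable_prodMk_left hs)) hint

lemma tvDist_compProd_left (p p' : Measure β) [IsProbabilityMeasure p] [IsProbabilityMeasure p']
    (κ₀ : Kernel β ℝ) [IsMarkovKernel κ₀] :
    tvDist (p ⊗ₘ κ₀) (p' ⊗ₘ κ₀) ≤ tvDist p p' := by
  apply tvDist_le
  intro s hs
  rw [toReal_compProd_apply p κ₀ hs, toReal_compProd_apply p' κ₀ hs]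
  exact abs_integral_sub_le_tvDist
    (Kernel.measurable_kernel_prodMk_left hs).ennreal_toReal
    (fun x => ENNReal.toReal_nonneg) (fun x => toReal_prob_le_one _)

lemma map_compProd_swap {d : ℕ} (i j : Fin d) (m : Measure (Fin d → ℝ)) [IsProbabilityMeasure m]
    (κ : Kernel (Fin d → ℝ) ℝ) [IsMarkovKernel κ] :
    ((m ⊗ₘ κ).map (fun z : (Fin d → ℝ) × ℝ => (swapVec i j z.1, z.2)))
      = (m.map (swapVec i j)) ⊗ₘ (κ.comap (swapVec i j) (measurable_swapVec i j)) := by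
  have hsw : Measurable (swapVec i j) := measurable_swapVec i j
  have hσ : Measurable (fun z : (Fin d → ℝ) × ℝ => (swapVec i j z.1, z.2)) :=
    (hsw.comp measurable_fst).prodMk measurable_snd
  haveI : IsProbabilityMeasure (m.map (swapVec i j)) :=
    Measure.isProbabilityMeasure_map hsw.aemeasurable
  ext s hs
  rw [Measure.map_apply hσ hs, Measure.compProd_apply (hσ hs), Measure.compProd_apply hs]
  rw [lintegral_map (Kernel.measurable_kernel_prodMk_left hs) hsw]
  apply lintegral_congr
  intro x
  rw [Kernel.comap_apply, swapVec_involutive]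
  rfl

end CompProd

/-- **Deviation of the pairwise comparison probability from 1/2.** For two i.i.d. samples
`Z1 = (X^(1), Y^(1))` and `Z2 = (X^(2), Y^(2))` from a joint law `μ` on `ℝ^d × ℝ` whose
conditional law of `Y` given `X` is the Markov kernel `κ` (`μ = μ_X ⊗ₘ κ`), and a score
function `T` with ties occurring with probability zero, the probability
`π = P(T(X^(1), Y^(1)) ≥ T(X^(2)_swap(i,j), Y^(2)))` satisfies
`|π - 1/2| ≤ E_X[d_TV(ℒ(Y|X_swap(i,j)), ℒ(Y|X))] + d_TV(ℒ(X), ℒ(X_swap(i,j)))`. -/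
theorem pairwise_comparison_probability_deviation
    {Ω : Type*} [MeasurableSpace Ω] (P : Measure Ω) [IsProbabilityMeasure P]
    {d : ℕ} (i j : Fin d)
    (Z1 Z2 : Ω → (Fin d → ℝ) × ℝ) (h1 : Measurable Z1) (h2 : Measurable Z2)
    (hindep : IndepFun Z1 Z2 P)
    (μ : Measure ((Fin d → ℝ) × ℝ)) [IsProbabilityMeasure μ]
    (hl1 : P.map Z1 = μ) (hl2 : P.map Z2 = μ)
    (κ : Kernel (Fin d → ℝ) ℝ) [IsMarkovKernel κ]
    (hκ : μ = (μ.map Prod.fst) ⊗ₘ κ)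
    (T : (Fin d → ℝ) → ℝ → ℝ)
    (hT : Measurable fun z : (Fin d → ℝ) × ℝ => T z.1 z.2)
    (hties : P {ω | T ((Z1 ω).1) ((Z1 ω).2)
        = T (swapVec i j ((Z2 ω).1)) ((Z2 ω).2)} = 0) :
    |(P {ω | T (swapVec i j ((Z2 ω).1)) ((Z2 ω).2) ≤ T ((Z1 ω).1) ((Z1 ω).2)}).toReal - 1 / 2|
      ≤ (∫ x, tvDist (κ (swapVec i j x)) (κ x) ∂(μ.map Prod.fst)) +
          tvDist (μ.map Prod.fst) ((μ.map Prod.fst).map (swapVec i j)) := by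
  have hsw : Measurable (swapVec i j) := measurable_swapVec i j
  set σ : ((Fin d → ℝ) × ℝ) → ((Fin d → ℝ) × ℝ) := fun z => (swapVec i j z.1, z.2) with hσ_def
  have hσ : Measurable σ := (hsw.comp measurable_fst).prodMk measurable_snd
  set ν : Measure ((Fin d → ℝ) × ℝ) := μ.map σ with hν_def
  haveI : IsProbabilityMeasure ν := Measure.isProbabilityMeasure_map hσ.aemeasurable
  set S : ((Fin d → ℝ) × ℝ) → ℝ := fun z => T z.1 z.2 with hS_def
  -- law of the pair
  have hindep' : IndepFun Z1 (σ ∘ Z2) P := hindep.comp measurable_id hσ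
  have hmap2 : P.map (σ ∘ Z2) = ν := by
    rw [← Measure.map_map hσ h2, hl2]
  have hlaw : P.map (fun ω => (Z1 ω, σ (Z2 ω))) = μ.prod ν := by
    have := (indepFun_iff_map_prod_eq_prod_map_map h1.aemeasurable
      (hσ.comp h2).aemeasurable).mp hindep'
    rw [hl1, hmap2] at this
    exact this
  have hpair : Measurable (fun ω => (Z1 ω, σ (Z2 ω))) := h1.prodMk (hσ.comp h2)
  -- events
  set A : Set (((Fin d → ℝ) × ℝ) × ((Fin d → ℝ) × ℝ)) := {z | S z.2 ≤ S z.1} with hA_def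
  have hA : MeasurableSet A := measurableSet_le (hT.comp measurable_snd) (hT.comp measurable_fst)
  set Atie : Set (((Fin d → ℝ) × ℝ) × ((Fin d → ℝ) × ℝ)) := {z | S z.1 = S z.2} with hAtie_def
  have hAtie : MeasurableSet Atie :=
    measurableSet_eq_fun (hT.comp measurable_fst) (hT.comp measurable_snd)
  have hev : {ω | T (swapVec i j ((Z2 ω).1)) ((Z2 ω).2) ≤ T ((Z1 ω).1) ((Z1 ω).2)}
      = (fun ω => (Z1 ω, σ (Z2 ω))) ⁻¹' A := rfl
  have hev2 : {ω | T ((Z1 ω).1) ((Z1 ω).2) = T (swapVec i j ((Z2 ω).1)) ((Z2 ω).2)}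
      = (fun ω => (Z1 ω, σ (Z2 ω))) ⁻¹' Atie := rfl
  have hPev : P {ω | T (swapVec i j ((Z2 ω).1)) ((Z2 ω).2) ≤ T ((Z1 ω).1) ((Z1 ω).2)}
      = (μ.prod ν) A := by
    rw [hev, ← hlaw, Measure.map_apply hpair hA]
  have hPties : (μ.prod ν) Atie = 0 := by
    rw [← hlaw, Measure.map_apply hpair hAtie, ← hev2]
    exact hties
  -- first bound
  have hdev : |((μ.prod ν) A).toReal - 1 / 2| ≤ tvDist μ ν :=
    half_dev μ ν S hT hPties
  -- second bound: tvDist μ ν ≤ ∫ + tvDist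
  set μX : Measure (Fin d → ℝ) := μ.map Prod.fst with hμX_def
  haveI : IsProbabilityMeasure μX := Measure.isProbabilityMeasure_map measurable_fst.aemeasurable
  set κsw : Kernel (Fin d → ℝ) ℝ := κ.comap (swapVec i j) hsw with hκsw_def
  haveI : IsMarkovKernel κsw := Kernel.IsMarkovKernel.comap κ hsw
  haveI : IsProbabilityMeasure (μX.map (swapVec i j)) :=
    Measure.isProbabilityMeasure_map hsw.aemeasurable
  have hν_eq : ν = (μX.map (swapVec i j)) ⊗ₘ κsw := by
    rw [hν_def, hκ]
    exact map_compProd_swap i j μX κ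
  have hμ_eq : μ = μX ⊗ₘ κ := hκ
  have hmeas : Measurable (fun x => tvDist (κ (swapVec i j x)) (κ x)) := by
    have := measurable_tvDist_kernel κsw κ
    simpa [hκsw_def, Kernel.comap_apply] using this
  have hint : Integrable (fun x => tvDist (κ (swapVec i j x)) (κ x)) μX := by
    apply integrable_of_bounded_meas hmeas (C := 2)
    intro x
    rw [abs_of_nonneg (tvDist_nonneg _ _)]
    exact tvDist_le_two _ _
  have hstep1 : tvDist (μX ⊗ₘ κ) (μX ⊗ₘ κsw)
      ≤ ∫ x, tvDist (κ (swapVec i j x)) (κ x) ∂μX := by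
    apply tvDist_compProd_right μX κ κsw hmeas ?_ hint
    intro x s hs
    have h := abs_toReal_sub_le_tvDist (κ (swapVec i j x)) (κ x) hs
    rw [abs_sub_comm] at h
    simpa [hκsw_def, Kernel.comap_apply] using h
  have hstep2 : tvDist (μX ⊗ₘ κsw) ((μX.map (swapVec i j)) ⊗ₘ κsw)
      ≤ tvDist μX (μX.map (swapVec i j)) :=
    tvDist_compProd_left _ _ _
  rw [hPev]
  refine hdev.trans ?_
  rw [hμ_eq, hν_eq]
  calc tvDist (μX ⊗ₘ κ) ((μX.map (swapVec i j)) ⊗ₘ κsw)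
      ≤ tvDist (μX ⊗ₘ κ) (μX ⊗ₘ κsw)
        + tvDist (μX ⊗ₘ κsw) ((μX.map (swapVec i j)) ⊗ₘ κsw) :=
        tvDist_triangle _ _ _
    _ ≤ (∫ x, tvDist (κ (swapVec i j x)) (κ x) ∂μX)
        + tvDist μX (μX.map (swapVec i j)) := add_le_add hstep1 hstep2
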